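/- (Diagonal specialization of the minor summation formula) In the setting of the determinantal minor summation formula, if the r-dimensional array A factors as A(I^(1),…,I^(r)) = A₀(I^(1)) δ_{I^(1),I^(2)} ⋯ δ_{I^(1),I^(r)} for a 1-dimensional l-block array A₀, then for any ln-subsets P^(1),…,P^(r) of [N], the subhyperpfaffian Pf^[l,r](A_{P^(1),…,P^(r)}) vanishes unless P^(1) = P^(2) = ⋯ = P^(r) = P, in which case it equals Pf^[l,1](A₀ restricted to P) when r is odd and Hf^[l,1](A₀ restricted to P) when r is even. -/
import Mathlib


open scoped Classical
open Finset Equiv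

noncomputable section

variable {F : Type*} [Field F] [CharZero F]

/-- The hyperdeterminant `det^[m]` of an `m`-dimensional tensor of size `n`:
`∑_{σ₁,…,σ_{m-1}} sgn(σ₁⋯σ_{m-1}) ∏_i A(i, σ₁ i, …, σ_{m-1} i)`, encoded as a sum over
`m`-tuples of permutations whose `0`-th component is forced to be the identity. -/
def hyperdet (m n : ℕ) (A : (Fin m → Fin n) → F) : F :=
  ∑ σ : Fin m → Equiv.Perm (Fin n),
    if (∀ k : Fin m, k.1 = 0 → σ k = 1) then
      (∏ k, ((Equiv.Perm.sign (σ k) : ℤ) : F)) * ∏ i, A fun k => σ k i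
    else 0

/-- `blk l n j i` is the `i`-th entry of the `j`-th consecutive block of length `l` in `[l*n]`. -/
def blk (l n : ℕ) (j : Fin n) (i : Fin l) : Fin (l * n) :=
  ⟨j.1 * l + i.1, by
    have hi := i.2; have hj := j.2
    calc j.1 * l + i.1 < (j.1 + 1) * l := by rw [Nat.add_mul, Nat.one_mul]; omega
      _ ≤ n * l := Nat.mul_le_mul_right l hj
      _ = l * n := Nat.mul_comm n l⟩

/-- A permutation of `[l*n]` is block-increasing if it is increasing on each of the
`n` consecutive blocks of length `l`. -/
def BlockInc (l n : ℕ) (σ : Equiv.Perm (Fin (l * n))) : Prop :=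
  ∀ j : Fin n, StrictMono fun i : Fin l => σ (blk l n j i)

/-- The `j`-th block of `σ`, as a subset of `[l*n]`. -/
def blkSet (l n : ℕ) (σ : Equiv.Perm (Fin (l * n))) (j : Fin n) : Finset (Fin (l * n)) :=
  Finset.image (fun i => σ (blk l n j i)) Finset.univ

/-- The hyperpfaffian `Pf^[l,m]` of an `m`-dimensional `l`-block array of size `l*n`
(the `m` dimensions are indexed by an arbitrary finite type `ι`). -/
def hyperpf (l n : ℕ) {ι : Type*} [Fintype ι]
    (B : (ι → Finset (Fin (l * n))) → F) : F :=
  (n.factorial : F)⁻¹ *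
    ∑ σ : ι → Equiv.Perm (Fin (l * n)),
      if ∀ s, BlockInc l n (σ s) then
        (∏ s, ((Equiv.Perm.sign (σ s) : ℤ) : F)) *
          ∏ k : Fin n, B fun s => blkSet l n (σ s) k
      else 0

/-- The hyperhafnian `Hf^[l,m]` (same sum as the hyperpfaffian, without signs). -/
def hyperhf (l n : ℕ) {ι : Type*} [Fintype ι]
    (B : (ι → Finset (Fin (l * n))) → F) : F :=
  (n.factorial : F)⁻¹ *
    ∑ σ : ι → Equiv.Perm (Fin (l * n)),
      if ∀ s, BlockInc l n (σ s) then
        ∏ k : Fin n, B fun s => blkSet l n (σ s) k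
      else 0


section Aux

variable {α : Type*} [LinearOrder α]

lemma map_biUnion_aux {β γ : Type*} [DecidableEq β] [DecidableEq γ] (s : Finset α)
    (t : α → Finset β) (f : β ↪ γ) :
    (s.biUnion t).map f = s.biUnion fun a => (t a).map f := by
  ext x
  simp only [Finset.mem_map, Finset.mem_biUnion]
  constructor
  · rintro ⟨b, ⟨a, ha, hb⟩, rfl⟩; exact ⟨a, ha, b, hb, rfl⟩
  · rintro ⟨a, ha, b, hb, rfl⟩; exact ⟨b, ⟨a, ha, hb⟩, rfl⟩

lemma orderEmbOfFin_congr {s t : Finset α} {k : ℕ} (h : s = t) (hs : s.card = k)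
    (ht : t.card = k) : s.orderEmbOfFin hs = t.orderEmbOfFin ht := by
  subst h; rfl

lemma map_univ_orderEmbOfFin (s : Finset α) {k : ℕ} (h : s.card = k) :
    Finset.univ.map (s.orderEmbOfFin h).toEmbedding = s := by
  apply Finset.eq_of_subset_of_card_le
  · intro x hx
    simp only [Finset.mem_map, Finset.mem_univ, true_and] at hx
    obtain ⟨i, rfl⟩ := hx
    exact s.orderEmbOfFin_mem h i
  · rw [Finset.card_map, Finset.card_univ, Fintype.card_fin, h]

lemma blk_surj {l n : ℕ} (hl0 : 0 < l) (m : Fin (l * n)) :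
    ∃ j i, blk l n j i = m := by
  have hm : m.1 < n * l := lt_of_lt_of_eq m.2 (Nat.mul_comm l n)
  have hjn : m.1 / l < n := by rw [Nat.div_lt_iff_lt_mul hl0]; exact hm
  refine ⟨⟨m.1 / l, hjn⟩, ⟨m.1 % l, Nat.mod_lt _ hl0⟩, ?_⟩
  apply Fin.ext
  show m.1 / l * l + m.1 % l = m.1
  exact Nat.div_add_mod' m.1 l

lemma biUnion_blkSet {l n : ℕ} (hl0 : 0 < l) (σ : Equiv.Perm (Fin (l * n))) :
    Finset.univ.biUnion (blkSet l n σ) = Finset.univ := by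
  apply Finset.eq_univ_of_forall
  intro x
  obtain ⟨j, i, hji⟩ := blk_surj hl0 (σ.symm x)
  rw [Finset.mem_biUnion]
  refine ⟨j, Finset.mem_univ _, ?_⟩
  rw [blkSet, Finset.mem_image]
  refine ⟨i, Finset.mem_univ _, ?_⟩
  rw [hji, Equiv.apply_symm_apply]

lemma card_blkSet {l n : ℕ} (σ : Equiv.Perm (Fin (l * n))) (hσ : BlockInc l n σ)
    (j : Fin n) : (blkSet l n σ j).card = l := by
  rw [blkSet, Finset.card_image_of_injective _ (hσ j).injective, Finset.card_univ,
    Fintype.card_fin]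

lemma blockInc_ext {l n : ℕ} (hl0 : 0 < l) {σ τ : Equiv.Perm (Fin (l * n))}
    (hσ : BlockInc l n σ) (hτ : BlockInc l n τ)
    (h : ∀ k, blkSet l n σ k = blkSet l n τ k) : σ = τ := by
  have key : ∀ (j : Fin n) (i : Fin l), σ (blk l n j i) = τ (blk l n j i) := by
    intro j i
    have h1 : (fun i : Fin l => σ (blk l n j i)) =
        (blkSet l n σ j).orderEmbOfFin (card_blkSet σ hσ j) :=
      Finset.orderEmbOfFin_unique _ (fun x => Finset.mem_image_of_mem _ (Finset.mem_univ x))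
        (hσ j)
    have h2 : (fun i : Fin l => τ (blk l n j i)) =
        (blkSet l n σ j).orderEmbOfFin (card_blkSet σ hσ j) := by
      apply Finset.orderEmbOfFin_unique _ _ (hτ j)
      intro x
      rw [h j]
      exact Finset.mem_image_of_mem _ (Finset.mem_univ x)
    have := h1.trans h2.symm
    exact congrFun this i
  apply Equiv.ext
  intro m
  obtain ⟨j, i, rfl⟩ := blk_surj hl0 m
  exact key j i

lemma sum_univ_instirrel {α M : Type*} [AddCommMonoid M] (I₁ I₂ : Fintype α)
    (f g : α → M) (h : ∀ a, f a = g a) :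
    @Finset.sum α M _ (@Finset.univ α I₁) f = @Finset.sum α M _ (@Finset.univ α I₂) g := by
  cases Subsingleton.elim I₁ I₂
  exact Finset.sum_congr rfl fun a _ => h a

lemma mem_univ' {α : Type*} {I : Fintype α} (a : α) : a ∈ @Finset.univ α I :=
  @Finset.mem_univ α I a

end Aux

/-- Diagonal specialization: the subhyperpfaffian of a diagonally factored array. -/
theorem hyperpf_diagonal (l r n N : ℕ) (hl : Even l) (hl0 : 0 < l) (hr : 0 < r)
    (hn : 0 < n) (hN : l * n ≤ N)
    (A₀ : Finset (Fin N) → F)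
    (P : Fin r → Finset (Fin N)) (hP : ∀ s, (P s).card = l * n) :
    hyperpf l n (fun I : Fin r → Finset (Fin (l * n)) =>
      (fun K : Fin r → Finset (Fin N) =>
          if ∀ s, K s = K ⟨0, hr⟩ then A₀ (K ⟨0, hr⟩) else 0)
        (fun s => (I s).map ((P s).orderEmbOfFin (hP s)).toEmbedding))
    = if ∀ s, P s = P ⟨0, hr⟩ then
        (if Odd r then
          hyperpf l n (fun I : Fin 1 → Finset (Fin (l * n)) =>
            A₀ ((I 0).map ((P ⟨0, hr⟩).orderEmbOfFin (hP ⟨0, hr⟩)).toEmbedding))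
        else
          hyperhf l n (fun I : Fin 1 → Finset (Fin (l * n)) =>
            A₀ ((I 0).map ((P ⟨0, hr⟩).orderEmbOfFin (hP ⟨0, hr⟩)).toEmbedding)))
      else 0 := by
  set e := (P ⟨0, hr⟩).orderEmbOfFin (hP ⟨0, hr⟩) with he_def
  by_cases hPP : ∀ s, P s = P ⟨0, hr⟩
  · -- diagonal case
    rw [if_pos hPP]
    have he : ∀ s, (P s).orderEmbOfFin (hP s) = e := fun s =>
      orderEmbOfFin_congr (hPP s) _ _
    simp only [he]
    have hinj : Function.Injective (Finset.map e.toEmbedding) :=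
      fun s t h => Finset.map_inj.mp h
    have hsgn_ne : ((Equiv.Perm.sign · : Equiv.Perm (Fin (l * n)) → ℤˣ)) = _ := rfl
    rcases Nat.even_or_odd r with hre | hro
    · -- r even : hafnian
      rw [if_neg (Nat.not_odd_iff_even.mpr hre), hyperpf, hyperhf]
      congr 1
      apply Finset.sum_bij_ne_zero (i := fun σ _ _ => (fun _ : Fin 1 => σ ⟨0, hr⟩))
      · intro a h₁ h₂; exact mem_univ' _
      · -- injectivity on support
        intro σ₁ m₁ h₁ σ₂ m₂ h₂ hE
        have hB₁ : ∀ s, BlockInc l n (σ₁ s) := by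
          by_contra hc; rw [if_neg hc] at h₁; exact h₁ rfl
        have hB₂ : ∀ s, BlockInc l n (σ₂ s) := by
          by_contra hc; rw [if_neg hc] at h₂; exact h₂ rfl
        have hd₁ : ∀ s, σ₁ s = σ₁ ⟨0, hr⟩ := by
          intro s
          apply blockInc_ext hl0 (hB₁ s) (hB₁ ⟨0, hr⟩)
          intro k
          by_contra hk
          rw [if_pos hB₁] at h₁
          refine h₁ (mul_eq_zero_of_right _ (Finset.prod_eq_zero (Finset.mem_univ k) ?_))
          exact if_neg fun hall => hk (hinj (hall s))
        have hd₂ : ∀ s, σ₂ s = σ₂ ⟨0, hr⟩ := by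
          intro s
          apply blockInc_ext hl0 (hB₂ s) (hB₂ ⟨0, hr⟩)
          intro k
          by_contra hk
          rw [if_pos hB₂] at h₂
          refine h₂ (mul_eq_zero_of_right _ (Finset.prod_eq_zero (Finset.mem_univ k) ?_))
          exact if_neg fun hall => hk (hinj (hall s))
        funext s
        rw [hd₁ s, hd₂ s]
        exact congrFun hE 0
      · -- surjectivity on support
        intro ν _ hg
        have hbi : BlockInc l n (ν 0) := by
          by_contra hc
          rw [if_neg (fun h => hc (h 0))] at hg
          exact hg rfl
        rw [if_pos (fun s : Fin 1 => (Subsingleton.elim (0 : Fin 1) s) ▸ hbi)] at hg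
        refine ⟨fun _ => ν 0, mem_univ' _, ?_, ?_⟩
        · -- f nonzero at the constant tuple
          rw [if_pos (fun _ : Fin r => hbi)]
          apply mul_ne_zero
          · beta_reduce
            rw [Finset.prod_const]
            apply pow_ne_zero
            rcases Int.units_eq_one_or (Equiv.Perm.sign (ν 0)) with h | h <;>
              rw [h] <;> norm_num
          · beta_reduce
            rw [Finset.prod_congr rfl fun k (_ : k ∈ (Finset.univ : Finset (Fin n))) =>
              if_pos fun _ : Fin r => rfl]
            exact hg
        · funext s
          rw [Subsingleton.elim s (0 : Fin 1)]
      · -- values agree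
        intro σ m₁ h₁
        have hB : ∀ s, BlockInc l n (σ s) := by
          by_contra hc; rw [if_neg hc] at h₁; exact h₁ rfl
        have hd : ∀ s, σ s = σ ⟨0, hr⟩ := by
          intro s
          apply blockInc_ext hl0 (hB s) (hB ⟨0, hr⟩)
          intro k
          by_contra hk
          rw [if_pos hB] at h₁
          refine h₁ (mul_eq_zero_of_right _ (Finset.prod_eq_zero (Finset.mem_univ k) ?_))
          exact if_neg fun hall => hk (hinj (hall s))
        obtain ⟨τ, rfl⟩ : ∃ τ, σ = fun _ => τ := ⟨σ ⟨0, hr⟩, funext hd⟩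
        have hbi : BlockInc l n τ := hB ⟨0, hr⟩
        rw [if_pos hB, if_pos (fun _ : Fin 1 => hbi)]
        beta_reduce
        rw [Finset.prod_const, Finset.card_univ, Fintype.card_fin]
        have hsgn : ((Equiv.Perm.sign τ : ℤ) : F) ^ r = 1 := by
          rcases Int.units_eq_one_or (Equiv.Perm.sign τ) with h | h <;> rw [h]
          · norm_num
          · push_cast
            exact hre.neg_one_pow
        rw [hsgn, one_mul]
        apply Finset.prod_congr rfl
        intro k _
        exact if_pos fun _ : Fin r => rfl
    · -- r odd : pfaffian
      rw [if_pos hro, hyperpf, hyperpf]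
      congr 1
      apply Finset.sum_bij_ne_zero (i := fun σ _ _ => (fun _ : Fin 1 => σ ⟨0, hr⟩))
      · intro a h₁ h₂; exact mem_univ' _
      · -- injectivity on support
        intro σ₁ m₁ h₁ σ₂ m₂ h₂ hE
        have hB₁ : ∀ s, BlockInc l n (σ₁ s) := by
          by_contra hc; rw [if_neg hc] at h₁; exact h₁ rfl
        have hB₂ : ∀ s, BlockInc l n (σ₂ s) := by
          by_contra hc; rw [if_neg hc] at h₂; exact h₂ rfl
        have hd₁ : ∀ s, σ₁ s = σ₁ ⟨0, hr⟩ := by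
          intro s
          apply blockInc_ext hl0 (hB₁ s) (hB₁ ⟨0, hr⟩)
          intro k
          by_contra hk
          rw [if_pos hB₁] at h₁
          refine h₁ (mul_eq_zero_of_right _ (Finset.prod_eq_zero (Finset.mem_univ k) ?_))
          exact if_neg fun hall => hk (hinj (hall s))
        have hd₂ : ∀ s, σ₂ s = σ₂ ⟨0, hr⟩ := by
          intro s
          apply blockInc_ext hl0 (hB₂ s) (hB₂ ⟨0, hr⟩)
          intro k
          by_contra hk
          rw [if_pos hB₂] at h₂
          refine h₂ (mul_eq_zero_of_right _ (Finset.prod_eq_zero (Finset.mem_univ k) ?_))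
          exact if_neg fun hall => hk (hinj (hall s))
        funext s
        rw [hd₁ s, hd₂ s]
        exact congrFun hE 0
      · -- surjectivity on support
        intro ν _ hg
        have hbi : BlockInc l n (ν 0) := by
          by_contra hc
          rw [if_neg (fun h => hc (h 0))] at hg
          exact hg rfl
        rw [if_pos (fun s : Fin 1 => (Subsingleton.elim (0 : Fin 1) s) ▸ hbi)] at hg
        have hg' := right_ne_zero_of_mul hg
        refine ⟨fun _ => ν 0, mem_univ' _, ?_, ?_⟩
        · rw [if_pos (fun _ : Fin r => hbi)]
          apply mul_ne_zero
          · beta_reduce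
            rw [Finset.prod_const]
            apply pow_ne_zero
            rcases Int.units_eq_one_or (Equiv.Perm.sign (ν 0)) with h | h <;>
              rw [h] <;> norm_num
          · beta_reduce
            rw [Finset.prod_congr rfl fun k (_ : k ∈ (Finset.univ : Finset (Fin n))) =>
              if_pos fun _ : Fin r => rfl]
            exact hg'
        · funext s
          rw [Subsingleton.elim s (0 : Fin 1)]
      · -- values agree
        intro σ m₁ h₁
        have hB : ∀ s, BlockInc l n (σ s) := by
          by_contra hc; rw [if_neg hc] at h₁; exact h₁ rfl
        have hd : ∀ s, σ s = σ ⟨0, hr⟩ := by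
          intro s
          apply blockInc_ext hl0 (hB s) (hB ⟨0, hr⟩)
          intro k
          by_contra hk
          rw [if_pos hB] at h₁
          refine h₁ (mul_eq_zero_of_right _ (Finset.prod_eq_zero (Finset.mem_univ k) ?_))
          exact if_neg fun hall => hk (hinj (hall s))
        obtain ⟨τ, rfl⟩ : ∃ τ, σ = fun _ => τ := ⟨σ ⟨0, hr⟩, funext hd⟩
        have hbi : BlockInc l n τ := hB ⟨0, hr⟩
        rw [if_pos hB, if_pos (fun _ : Fin 1 => hbi)]
        beta_reduce
        rw [Finset.prod_const, Finset.prod_const, Finset.card_univ, Finset.card_univ,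
          Fintype.card_fin, Fintype.card_fin, pow_one]
        have hsgn : ((Equiv.Perm.sign τ : ℤ) : F) ^ r = ((Equiv.Perm.sign τ : ℤ) : F) := by
          rcases Int.units_eq_one_or (Equiv.Perm.sign τ) with h | h <;> rw [h]
          · norm_num
          · push_cast
            exact hro.neg_one_pow
        rw [hsgn]
        congr 1
        apply Finset.prod_congr rfl
        intro k _
        exact if_pos fun _ : Fin r => rfl
  · -- off-diagonal case: result vanishes
    rw [if_neg hPP]
    rw [hyperpf, mul_eq_zero]
    right
    apply Finset.sum_eq_zero
    intro σ _
    by_cases hB : ∀ s, BlockInc l n (σ s)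
    · rw [if_pos hB]
      rw [Fintype.prod_ite_zero]
      rw [if_neg, mul_zero]
      intro hall
      apply hPP
      intro s
      have h1 : ∀ s' : Fin r, Finset.univ.map ((P s').orderEmbOfFin (hP s')).toEmbedding =
          Finset.univ.biUnion fun k =>
            (blkSet l n (σ s') k).map ((P s').orderEmbOfFin (hP s')).toEmbedding := by
        intro s'
        rw [← map_biUnion_aux, biUnion_blkSet hl0]
      have h2 : Finset.univ.biUnion
          (fun k => (blkSet l n (σ s) k).map ((P s).orderEmbOfFin (hP s)).toEmbedding) =
          Finset.univ.biUnion
          (fun k => (blkSet l n (σ ⟨0, hr⟩) k).map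
            ((P ⟨0, hr⟩).orderEmbOfFin (hP ⟨0, hr⟩)).toEmbedding) :=
        Finset.biUnion_congr rfl fun k _ => hall k s
      have h3 := (h1 s).trans (h2.trans (h1 ⟨0, hr⟩).symm)
      rw [map_univ_orderEmbOfFin, map_univ_orderEmbOfFin] at h3
      exact h3
    · rw [if_neg hB]
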